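/- For every alternating parity automaton A, if the nondeterministic parity automaton A^□ is GFG, then A is ∃GFG. -/

import Mathlib

set_option autoImplicit false
set_option linter.unusedVariables false

/-! ### Positive Boolean formulas -/

inductive PosBool (Q : Type) : Type
  | atom : Q → PosBool Q
  | and : PosBool Q → PosBool Q → PosBool Q
  | or : PosBool Q → PosBool Q → PosBool Q

namespace PosBool

variable {Q : Type}

/-- The possible outcomes of Eve resolving all the disjunctions of a positive
Boolean formula: each element of `eveRes φ` is the set of atoms that Adam can
reach (by resolving the conjunctions) against that fixed resolution of Eve.
These are exactly the `q`-boxes of the one-step game over the formula `φ`. -/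
def eveRes : PosBool Q → Set (Set Q)
  | atom q => {{q}}
  | and f g => {s | ∃ u ∈ eveRes f, ∃ v ∈ eveRes g, s = u ∪ v}
  | or f g => eveRes f ∪ eveRes g

/-- The dual formula: swap disjunctions and conjunctions. -/
def dual : PosBool Q → PosBool Q
  | atom q => atom q
  | and f g => or (dual f) (dual g)
  | or f g => and (dual f) (dual g)

/-- Length (number of nodes) of a formula. -/
def size : PosBool Q → ℕ
  | atom _ => 1
  | and f g => size f + size g + 1
  | or f g => size f + size g + 1

/-- Atoms occurring in a formula. -/
def atoms : PosBool Q → Set Q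
  | atom q => {q}
  | and f g => atoms f ∪ atoms g
  | or f g => atoms f ∪ atoms g

/-- A purely conjunctive formula (no disjunctions). -/
def NoOr : PosBool Q → Prop
  | atom _ => True
  | and f g => NoOr f ∧ NoOr g
  | or _ _ => False

/-- A purely disjunctive formula (no conjunctions). -/
def NoAnd : PosBool Q → Prop
  | atom _ => True
  | and _ _ => False
  | or f g => NoAnd f ∧ NoAnd g

/-- Disjunctive normal form: a disjunction of conjunctions. -/
def IsDNF : PosBool Q → Prop
  | or f g => IsDNF f ∧ IsDNF g
  | φ => NoOr φ

end PosBool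

/-! ### Acceptance conditions -/

/-- `c` appears infinitely often in `f`. -/
def InfOften (f : ℕ → ℕ) (c : ℕ) : Prop := ∀ n, ∃ m, n ≤ m ∧ f m = c

/-- The parity condition: the highest value appearing infinitely often is even. -/
def ParityAccept (f : ℕ → ℕ) : Prop :=
  ∃ c, Even c ∧ InfOften f c ∧ ∀ d, InfOften f d → d ≤ c

/-- The sequence `ρ` visits the set `S` infinitely often. -/
def InfOftenIn {T : Type} (ρ : ℕ → T) (S : Set T) : Prop := ∀ n, ∃ m, n ≤ m ∧ ρ m ∈ S

/-- A Rabin (or Streett) pair of sets of transitions. -/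
structure RabinPair (T : Type) where
  bad : Set T
  good : Set T

/-- The Rabin condition for pairs `⟨B_i, G_i⟩`, `i < k`: for some `i`,
`inf(ρ) ∩ B_i = ∅` and `inf(ρ) ∩ G_i ≠ ∅`. -/
def RabinAccept {T : Type} {k : ℕ} (pairs : Fin k → RabinPair T) (ρ : ℕ → T) : Prop :=
  ∃ i, ¬ InfOftenIn ρ (pairs i).bad ∧ InfOftenIn ρ (pairs i).good

/-- The Streett condition for pairs `⟨B_i, G_i⟩`, `i < k`: for every `i`,
`inf(ρ) ∩ B_i = ∅` or `inf(ρ) ∩ G_i ≠ ∅`. -/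
def StreettAccept {T : Type} {k : ℕ} (pairs : Fin k → RabinPair T) (ρ : ℕ → T) : Prop :=
  ∀ i, ¬ InfOftenIn ρ (pairs i).bad ∨ InfOftenIn ρ (pairs i).good

/-! ### Generic two-player games of infinite duration.

A game proceeds in rounds; in each round, from the current game state, up to
six moves are played in alternation: Adam moves first (`a1`), then Eve (`e1`),
then Adam (`a2`), then Eve (`e2`), then Adam (`a3`), then Eve (`e3`).
(Unused phases are modelled by the type `Unit`.)  Strategies may use the full
history of the play (the list of previous complete rounds) as well as the moves
already played in the current round.  Eve wins an infinite play iff the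
sequence of rounds satisfies the winning condition `win`. -/

structure GameRound (St α1 β1 α2 β2 α3 β3 : Type) where
  st : St
  a1 : α1
  e1 : β1
  a2 : α2
  e2 : β2
  a3 : α3
  e3 : β3

structure Game (St α1 β1 α2 β2 α3 β3 : Type) where
  init : St
  A1 : St → Set α1
  E1 : St → α1 → Set β1
  A2 : St → α1 → β1 → Set α2
  E2 : St → α1 → β1 → α2 → Set β2
  A3 : St → α1 → β1 → α2 → β2 → Set α3
  E3 : St → α1 → β1 → α2 → β2 → α3 → Set β3
  next : St → α1 → β1 → α2 → β2 → α3 → β3 → St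
  win : (ℕ → GameRound St α1 β1 α2 β2 α3 β3) → Prop

namespace Game

variable {St α1 β1 α2 β2 α3 β3 : Type}

/-- The states along the play are correctly updated. -/
def StateOk (G : Game St α1 β1 α2 β2 α3 β3) (ρ : ℕ → GameRound St α1 β1 α2 β2 α3 β3) : Prop :=
  (ρ 0).st = G.init ∧
  ∀ n, (ρ (n+1)).st = G.next (ρ n).st (ρ n).a1 (ρ n).e1 (ρ n).a2 (ρ n).e2 (ρ n).a3 (ρ n).e3

/-- Round `n` of the play is entirely legal. -/
def RoundLegal (G : Game St α1 β1 α2 β2 α3 β3) (ρ : ℕ → GameRound St α1 β1 α2 β2 α3 β3)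
    (n : ℕ) : Prop :=
  (ρ n).a1 ∈ G.A1 (ρ n).st ∧
  (ρ n).e1 ∈ G.E1 (ρ n).st (ρ n).a1 ∧
  (ρ n).a2 ∈ G.A2 (ρ n).st (ρ n).a1 (ρ n).e1 ∧
  (ρ n).e2 ∈ G.E2 (ρ n).st (ρ n).a1 (ρ n).e1 (ρ n).a2 ∧
  (ρ n).a3 ∈ G.A3 (ρ n).st (ρ n).a1 (ρ n).e1 (ρ n).a2 (ρ n).e2 ∧
  (ρ n).e3 ∈ G.E3 (ρ n).st (ρ n).a1 (ρ n).e1 (ρ n).a2 (ρ n).e2 (ρ n).a3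

/-- All rounds before round `n` are entirely legal. -/
def Hleg (G : Game St α1 β1 α2 β2 α3 β3) (ρ : ℕ → GameRound St α1 β1 α2 β2 α3 β3)
    (n : ℕ) : Prop :=
  ∀ m, m < n → RoundLegal G ρ m

/-- Eve wins the play `ρ`: she is never the first player to make an illegal
move (the moves of each round are ordered `a1, e1, a2, e2, a3, e3`), and if all
moves are legal then the play satisfies the winning condition. -/
def EveWinsPlay (G : Game St α1 β1 α2 β2 α3 β3)
    (ρ : ℕ → GameRound St α1 β1 α2 β2 α3 β3) : Prop :=
  (∀ n, Hleg G ρ n → (ρ n).a1 ∈ G.A1 (ρ n).st →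
      (ρ n).e1 ∈ G.E1 (ρ n).st (ρ n).a1) ∧
  (∀ n, Hleg G ρ n → (ρ n).a1 ∈ G.A1 (ρ n).st →
      (ρ n).e1 ∈ G.E1 (ρ n).st (ρ n).a1 →
      (ρ n).a2 ∈ G.A2 (ρ n).st (ρ n).a1 (ρ n).e1 →
      (ρ n).e2 ∈ G.E2 (ρ n).st (ρ n).a1 (ρ n).e1 (ρ n).a2) ∧
  (∀ n, Hleg G ρ n → (ρ n).a1 ∈ G.A1 (ρ n).st →
      (ρ n).e1 ∈ G.E1 (ρ n).st (ρ n).a1 →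
      (ρ n).a2 ∈ G.A2 (ρ n).st (ρ n).a1 (ρ n).e1 →
      (ρ n).e2 ∈ G.E2 (ρ n).st (ρ n).a1 (ρ n).e1 (ρ n).a2 →
      (ρ n).a3 ∈ G.A3 (ρ n).st (ρ n).a1 (ρ n).e1 (ρ n).a2 (ρ n).e2 →
      (ρ n).e3 ∈ G.E3 (ρ n).st (ρ n).a1 (ρ n).e1 (ρ n).a2 (ρ n).e2 (ρ n).a3) ∧
  ((∀ n, RoundLegal G ρ n) → G.win ρ)

/-- Adam wins the play `ρ`: he is never the first player to make an illegal
move, and if all moves are legal then the play violates the (Eve) winning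
condition. -/
def AdamWinsPlay (G : Game St α1 β1 α2 β2 α3 β3)
    (ρ : ℕ → GameRound St α1 β1 α2 β2 α3 β3) : Prop :=
  (∀ n, Hleg G ρ n → (ρ n).a1 ∈ G.A1 (ρ n).st) ∧
  (∀ n, Hleg G ρ n → (ρ n).a1 ∈ G.A1 (ρ n).st →
      (ρ n).e1 ∈ G.E1 (ρ n).st (ρ n).a1 →
      (ρ n).a2 ∈ G.A2 (ρ n).st (ρ n).a1 (ρ n).e1) ∧
  (∀ n, Hleg G ρ n → (ρ n).a1 ∈ G.A1 (ρ n).st →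
      (ρ n).e1 ∈ G.E1 (ρ n).st (ρ n).a1 →
      (ρ n).a2 ∈ G.A2 (ρ n).st (ρ n).a1 (ρ n).e1 →
      (ρ n).e2 ∈ G.E2 (ρ n).st (ρ n).a1 (ρ n).e1 (ρ n).a2 →
      (ρ n).a3 ∈ G.A3 (ρ n).st (ρ n).a1 (ρ n).e1 (ρ n).a2 (ρ n).e2) ∧
  ((∀ n, RoundLegal G ρ n) → ¬ G.win ρ)

/-- The history of a play before round `n`: the list of the first `n` rounds. -/
def hist (ρ : ℕ → GameRound St α1 β1 α2 β2 α3 β3) (n : ℕ) : List (GameRound St α1 β1 α2 β2 α3 β3) :=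
  (List.range n).map ρ

/-- A strategy of Eve: for each of her three moves in a round, a choice
depending on the history, the current state, and the moves already played
in the current round. -/
structure EStrat (St α1 β1 α2 β2 α3 β3 : Type) where
  f1 : List (GameRound St α1 β1 α2 β2 α3 β3) → St → α1 → β1
  f2 : List (GameRound St α1 β1 α2 β2 α3 β3) → St → α1 → β1 → α2 → β2
  f3 : List (GameRound St α1 β1 α2 β2 α3 β3) → St → α1 → β1 → α2 → β2 → α3 → β3

/-- A strategy of Adam. -/
structure AStrat (St α1 β1 α2 β2 α3 β3 : Type) where
  g1 : List (GameRound St α1 β1 α2 β2 α3 β3) → St → α1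
  g2 : List (GameRound St α1 β1 α2 β2 α3 β3) → St → α1 → β1 → α2
  g3 : List (GameRound St α1 β1 α2 β2 α3 β3) → St → α1 → β1 → α2 → β2 → α3

/-- The play `ρ` is consistent with the strategy `σ` of Eve. -/
def ConsE (σ : EStrat St α1 β1 α2 β2 α3 β3) (ρ : ℕ → GameRound St α1 β1 α2 β2 α3 β3) : Prop :=
  ∀ n, (ρ n).e1 = σ.f1 (hist ρ n) (ρ n).st (ρ n).a1 ∧
       (ρ n).e2 = σ.f2 (hist ρ n) (ρ n).st (ρ n).a1 (ρ n).e1 (ρ n).a2 ∧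
       (ρ n).e3 = σ.f3 (hist ρ n) (ρ n).st (ρ n).a1 (ρ n).e1 (ρ n).a2 (ρ n).e2 (ρ n).a3

/-- The play `ρ` is consistent with the strategy `τ` of Adam. -/
def ConsA (τ : AStrat St α1 β1 α2 β2 α3 β3) (ρ : ℕ → GameRound St α1 β1 α2 β2 α3 β3) : Prop :=
  ∀ n, (ρ n).a1 = τ.g1 (hist ρ n) (ρ n).st ∧
       (ρ n).a2 = τ.g2 (hist ρ n) (ρ n).st (ρ n).a1 (ρ n).e1 ∧
       (ρ n).a3 = τ.g3 (hist ρ n) (ρ n).st (ρ n).a1 (ρ n).e1 (ρ n).a2 (ρ n).e2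

/-- `σ` is a winning strategy for Eve: every play consistent with `σ` is won
by Eve. -/
def EveWinningStrat (G : Game St α1 β1 α2 β2 α3 β3) (σ : EStrat St α1 β1 α2 β2 α3 β3) : Prop :=
  ∀ ρ, StateOk G ρ → ConsE σ ρ → EveWinsPlay G ρ

/-- Eve wins the game `G`. -/
def EveWins (G : Game St α1 β1 α2 β2 α3 β3) : Prop := ∃ σ, EveWinningStrat G σ

/-- `τ` is a winning strategy for Adam: every play consistent with `τ` is won
by Adam. -/
def AdamWinningStrat (G : Game St α1 β1 α2 β2 α3 β3) (τ : AStrat St α1 β1 α2 β2 α3 β3) : Prop :=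
  ∀ ρ, StateOk G ρ → ConsA τ ρ → AdamWinsPlay G ρ

/-- Adam wins the game `G`. -/
def AdamWins (G : Game St α1 β1 α2 β2 α3 β3) : Prop := ∃ τ, AdamWinningStrat G τ

end Game
/-! ### Alternating automata on infinite words -/

/-- An alternating automaton over the alphabet `A`: a set of states, an initial
state, a transition function assigning to each state and letter a positive
Boolean formula over the states, and an acceptance condition `acc` on infinite
sequences of transitions `(q_n, a_n, q_{n+1})`. -/
structure AltAut (A : Type) where
  Q : Type
  init : Q
  delta : Q → A → PosBool Q
  acc : (ℕ → Q × A × Q) → Prop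

namespace AltAut

variable {A : Type}

/-- `M` is a parity automaton with priority labelling `p`. -/
def IsParity (M : AltAut A) (p : M.Q → A → M.Q → ℕ) : Prop :=
  ∀ ρ, M.acc ρ ↔ ParityAccept fun n => p (ρ n).1 (ρ n).2.1 (ρ n).2.2

/-- `M` is a Rabin automaton with the Rabin pairs `pairs`. -/
def IsRabin (M : AltAut A) {k : ℕ} (pairs : Fin k → RabinPair (M.Q × A × M.Q)) : Prop :=
  ∀ ρ, M.acc ρ ↔ RabinAccept pairs ρ

/-- `M` is a Streett automaton with the Streett pairs `pairs`. -/
def IsStreett (M : AltAut A) {k : ℕ} (pairs : Fin k → RabinPair (M.Q × A × M.Q)) : Prop :=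
  ∀ ρ, M.acc ρ ↔ StreettAccept pairs ρ

/-- `M` is a Büchi automaton with accepting transitions `F`. -/
def IsBuchi (M : AltAut A) (F : Set (M.Q × A × M.Q)) : Prop :=
  ∀ ρ, M.acc ρ ↔ InfOftenIn ρ F

/-- `M` is a weak automaton (with parity labelling `p`): every path following
transitions of the automaton eventually remains in a single priority. -/
def IsWeak (M : AltAut A) (p : M.Q → A → M.Q → ℕ) : Prop :=
  M.IsParity p ∧
  ∀ ρ : ℕ → M.Q × A × M.Q,
    (∀ n, (ρ n).2.2 = (ρ (n+1)).1 ∧ (ρ n).2.2 ∈ PosBool.atoms (M.delta (ρ n).1 (ρ n).2.1)) →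
    ∃ N c, ∀ n, N ≤ n → p (ρ n).1 (ρ n).2.1 (ρ n).2.2 = c

/-- `M` is nondeterministic: all transition conditions are disjunctive. -/
def IsNondet (M : AltAut A) : Prop := ∀ q a, (M.delta q a).NoAnd

/-- `M` is universal: all transition conditions are conjunctive. -/
def IsUniversal (M : AltAut A) : Prop := ∀ q a, (M.delta q a).NoOr

/-- The dual automaton: swap disjunctions and conjunctions, and dualise the
acceptance condition. -/
def dual (M : AltAut A) : AltAut A where
  Q := M.Q
  init := M.init
  delta q a := (M.delta q a).dual
  acc ρ := ¬ M.acc ρ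

/-- The model-checking (acceptance) game of `M` over the word `w`.  A round
from state `q` at step `n`: Eve resolves the disjunctions of `δ(q, w_n)`
(choosing an element of `eveRes`), and Adam resolves the conjunctions
(choosing a state in that set).  Eve wins iff the resulting path of
transitions is accepting. -/
def mcGame (M : AltAut A) (w : ℕ → A) :
    Game (ℕ × M.Q) Unit (Set M.Q) M.Q Unit Unit Unit where
  init := (0, M.init)
  A1 _ := Set.univ
  E1 p _ := PosBool.eveRes (M.delta p.2 (w p.1))
  A2 _ _ S := S
  E2 _ _ _ _ := Set.univ
  A3 _ _ _ _ _ := Set.univ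
  E3 _ _ _ _ _ _ := Set.univ
  next p _ _ q' _ _ _ := (p.1 + 1, q')
  win ρ := M.acc fun n => ((ρ n).st.2, w n, (ρ n).a2)

/-- The language of `M`: the words for which Eve wins the model-checking game. -/
def Lang (M : AltAut A) : Set (ℕ → A) := {w | Game.EveWins (M.mcGame w)}

/-- Eve's letter game on `M`: Adam picks a letter, then the one-step formula is
resolved (Eve the disjunctions, Adam the conjunctions).  Eve wins iff the word
played is not in `L(M)` or the path produced is accepting. -/
def eLetterGame (M : AltAut A) : Game M.Q A (Set M.Q) M.Q Unit Unit Unit where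
  init := M.init
  A1 _ := Set.univ
  E1 q a := PosBool.eveRes (M.delta q a)
  A2 _ _ S := S
  E2 _ _ _ _ := Set.univ
  A3 _ _ _ _ _ := Set.univ
  E3 _ _ _ _ _ _ := Set.univ
  next _ _ _ q' _ _ _ := q'
  win ρ := (fun n => (ρ n).a1) ∉ M.Lang ∨ M.acc fun n => ((ρ n).st, (ρ n).a1, (ρ n).a2)

/-- Adam's letter game on `M`: Eve picks a letter and resolves the disjunctions
of the one-step formula, Adam resolves the conjunctions.  Adam wins iff the
word played is in `L(M)` or the path produced is rejecting; accordingly the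
condition `win` (for Eve) is that the word is not in `L(M)` and the path is
accepting. -/
def aLetterGame (M : AltAut A) : Game M.Q Unit (A × Set M.Q) M.Q Unit Unit Unit where
  init := M.init
  A1 _ := Set.univ
  E1 q _ := {m : A × Set M.Q | m.2 ∈ PosBool.eveRes (M.delta q m.1)}
  A2 _ _ m := m.2
  E2 _ _ _ _ := Set.univ
  A3 _ _ _ _ _ := Set.univ
  E3 _ _ _ _ _ _ := Set.univ
  next _ _ _ q' _ _ _ := q'
  win ρ := (fun n => (ρ n).e1.1) ∉ M.Lang ∧ M.acc fun n => ((ρ n).st, (ρ n).e1.1, (ρ n).a2)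

/-- `M` is ∃GFG: Eve wins her letter game. -/
def ExistsGFG (M : AltAut A) : Prop := Game.EveWins M.eLetterGame

/-- `M` is ∀GFG: Adam wins his letter game. -/
def ForallGFG (M : AltAut A) : Prop := Game.AdamWins M.aLetterGame

/-- `M` is good-for-games: it is both ∃GFG and ∀GFG. -/
def GFG (M : AltAut A) : Prop := M.ExistsGFG ∧ M.ForallGFG

/-- `b` is a box of `M` over the letter `a`: a simultaneous resolution, for
every state `q`, of the disjunctions of `δ(q, a)`; `b q` is the set of states
Adam can reach from `q` against this resolution. -/
def IsBox (M : AltAut A) (a : A) (b : M.Q → Set M.Q) : Prop :=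
  ∀ q, b q ∈ PosBool.eveRes (M.delta q a)

/-- The boxes of `M` (over all letters), as an alphabet. -/
def Boxes (M : AltAut A) : Type := {β : A × (M.Q → Set M.Q) // M.IsBox β.1 β.2}

/-- A sequence of (letter, box) pairs is universally accepting for `M` if every
path through it starting at the initial state is accepting. -/
def UnivAcceptingRaw (M : AltAut A) (u : ℕ → A × (M.Q → Set M.Q)) : Prop :=
  ∀ ρ : ℕ → M.Q, ρ 0 = M.init → (∀ n, ρ (n+1) ∈ (u n).2 (ρ n)) →
    M.acc fun n => (ρ n, (u n).1, ρ (n+1))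

/-- The set of universally accepting words over the alphabet of boxes of `M`. -/
def UnivAccLang (M : AltAut A) : Set (ℕ → M.Boxes) :=
  {u | M.UnivAcceptingRaw fun n => (u n).val}

/-- The size of an automaton: the maximum of the size of the alphabet, the
number of states and the total length of the transition conditions. -/
noncomputable def sizeN (M : AltAut A) : ℕ :=
  max (Nat.card A) (max (Nat.card M.Q) (∑ᶠ q : M.Q, ∑ᶠ a : A, (M.delta q a).size))

/-- The two-token game `G₂(M)` on an alternating automaton `M`.  A configuration
is a triple of states `(p, q₁, q₂)`; in each turn Adam picks a letter `a`, the
players resolve `δ_M(p, a)` (Eve the disjunctions, Adam the conjunctions),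
producing a transition of Eve's token, and then resolve `δ_{M̄}(q₁, a)` and
`δ_{M̄}(q₂, a)` in the dual automaton (Adam the disjunctions, Eve the
conjunctions), producing transitions of Adam's two tokens.  Eve wins iff her
path is accepting in `M`, or both of Adam's paths are rejecting in `M`. -/
def G2 (M : AltAut A) :
    Game (M.Q × M.Q × M.Q) A (Set M.Q) (M.Q × Set M.Q × Set M.Q) (M.Q × M.Q) Unit Unit where
  init := (M.init, M.init, M.init)
  A1 _ := Set.univ
  E1 c a := PosBool.eveRes (M.delta c.1 a)
  A2 c a S := {m | m.1 ∈ S ∧ m.2.1 ∈ PosBool.eveRes (M.dual.delta c.2.1 a) ∧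
                   m.2.2 ∈ PosBool.eveRes (M.dual.delta c.2.2 a)}
  E2 _ _ _ m := {x | x.1 ∈ m.2.1 ∧ x.2 ∈ m.2.2}
  A3 _ _ _ _ _ := Set.univ
  E3 _ _ _ _ _ _ := Set.univ
  next c _ _ m x _ _ := (m.1, x.1, x.2)
  win ρ :=
    M.acc (fun n => ((ρ n).st.1, (ρ n).a1, (ρ n).a2.1)) ∨
    (¬ M.acc (fun n => ((ρ n).st.2.1, (ρ n).a1, (ρ n).e2.1)) ∧
     ¬ M.acc (fun n => ((ρ n).st.2.2, (ρ n).a1, (ρ n).e2.2)))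

end AltAut

/-! ### Deterministic and nondeterministic parity automata -/

/-- A deterministic parity automaton over the alphabet `A` (priorities on
transitions). -/
structure DPA (A : Type) where
  S : Type
  init : S
  step : S → A → S
  prio : S → A → ℕ

namespace DPA

variable {A : Type}

/-- The (unique) run of `D` on `w`. -/
def run (D : DPA A) (w : ℕ → A) : ℕ → D.S
  | 0 => D.init
  | n + 1 => D.step (D.run w n) (w n)

/-- The language of `D`. -/
def Lang (D : DPA A) : Set (ℕ → A) :=
  {w | ParityAccept fun n => D.prio (D.run w n) (w n)}

end DPA

/-- A nondeterministic parity automaton over the alphabet `A`, with an abstract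
set `T` of transitions, each with a source, a letter, a destination and a
priority. -/
structure NPA (A : Type) where
  S : Type
  init : S
  T : Type
  src : T → S
  lab : T → A
  dst : T → S
  prio : T → ℕ

namespace NPA

variable {A : Type}

/-- `r` is a run of `N` over `w`. -/
def IsRun (N : NPA A) (w : ℕ → A) (r : ℕ → N.T) : Prop :=
  N.src (r 0) = N.init ∧ (∀ n, N.src (r (n+1)) = N.dst (r n)) ∧ ∀ n, N.lab (r n) = w n

/-- The language of `N`: the words admitting an accepting run. -/
def Lang (N : NPA A) : Set (ℕ → A) :=
  {w | ∃ r, N.IsRun w r ∧ ParityAccept fun n => N.prio (r n)}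

/-- The letter game on `N`: Adam picks letters, Eve picks transitions; Eve wins
iff the word played is not in `L(N)` or her run is accepting. -/
def letterGame (N : NPA A) : Game N.S A N.T Unit Unit Unit Unit where
  init := N.init
  A1 _ := Set.univ
  E1 s a := {t | N.src t = s ∧ N.lab t = a}
  A2 _ _ _ := Set.univ
  E2 _ _ _ _ := Set.univ
  A3 _ _ _ _ _ := Set.univ
  E3 _ _ _ _ _ _ := Set.univ
  next _ _ t _ _ _ _ := N.dst t
  win ρ := (fun n => (ρ n).a1) ∉ N.Lang ∨ ParityAccept fun n => N.prio (ρ n).e1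

/-- `N` is good-for-games. -/
def GFG (N : NPA A) : Prop := Game.EveWins N.letterGame

/-- The two-token game `G₂(N)` on a nondeterministic automaton `N`: Adam picks
a letter, Eve picks a transition for her token, Adam picks transitions for his
two tokens.  Eve wins iff her run is accepting or both of Adam's runs are
rejecting. -/
def G2 (N : NPA A) : Game (N.S × N.S × N.S) A N.T (N.T × N.T) Unit Unit Unit where
  init := (N.init, N.init, N.init)
  A1 _ := Set.univ
  E1 c a := {t | N.src t = c.1 ∧ N.lab t = a}
  A2 c a _ := {m | N.src m.1 = c.2.1 ∧ N.lab m.1 = a ∧ N.src m.2 = c.2.2 ∧ N.lab m.2 = a}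
  E2 _ _ _ _ := Set.univ
  A3 _ _ _ _ _ := Set.univ
  E3 _ _ _ _ _ _ := Set.univ
  next _ _ t m _ _ _ := (N.dst t, N.dst m.1, N.dst m.2)
  win ρ :=
    ParityAccept (fun n => N.prio (ρ n).e1) ∨
    (¬ ParityAccept (fun n => N.prio (ρ n).a2.1) ∧
     ¬ ParityAccept (fun n => N.prio (ρ n).a2.2))

end NPA

/-- The nondeterministic parity automaton `A^□` obtained from an alternating
automaton `M` and a deterministic parity automaton `B` over the alphabet of
boxes of `M`: upon reading a letter `a`, it nondeterministically chooses a box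
of `M` over `a` and follows the transition of `B` over that box. -/
def boxNPA {A : Type} (M : AltAut A) (B : DPA M.Boxes) : NPA A where
  S := B.S
  init := B.init
  T := B.S × M.Boxes
  src t := t.1
  lab t := t.2.val.1
  dst t := B.step t.1 t.2
  prio t := B.prio t.1 t.2


/-! ### Auxiliary machinery for the proof -/

universe u_rk in
noncomputable def WellFounded.rank {α : Type u_rk} {r : α → α → Prop} (hwf : WellFounded r)
    (a : α) : Ordinal.{u_rk} :=
  (hwf.apply a).rank

universe u_rk in
theorem WellFounded.rank_eq {α : Type u_rk} {r : α → α → Prop} (hwf : WellFounded r) (a : α) :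
    hwf.rank a = ⨆ b : { b // r b a }, Order.succ (hwf.rank b) :=
  (hwf.apply a).rank_eq

universe u_rk in
theorem WellFounded.rank_lt_of_rel {α : Type u_rk} {r : α → α → Prop} (hwf : WellFounded r)
    {a b : α} (h : r a b) : hwf.rank a < hwf.rank b :=
  Acc.rank_lt_of_rel _ h

lemma aux_rank_le_of_subrel {α : Type} {r : α → α → Prop} (h : WellFounded r) {a b : α}
    (hs : ∀ z, r z a → r z b) : h.rank a ≤ h.rank b := by
  rw [WellFounded.rank_eq]
  apply Ordinal.iSup_le
  rintro ⟨z, hz⟩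
  exact Order.succ_le_of_lt (h.rank_lt_of_rel (hs z hz))

lemma aux_rank_eq_zero {α : Type} {r : α → α → Prop} (h : WellFounded r) {a : α}
    (hs : ∀ z, ¬ r z a) : h.rank a = 0 := by
  rw [WellFounded.rank_eq]
  apply le_antisymm _ zero_le
  apply Ordinal.iSup_le
  rintro ⟨z, hz⟩
  exact absurd hz (hs z)

lemma aux_ord_min_mem {s : Set Ordinal} (hs : s.Nonempty) : ∃ x ∈ s, ∀ y ∈ s, x ≤ y :=
  ⟨Ordinal.lt_wf.min s hs, Ordinal.lt_wf.min_mem s hs,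
    fun _ hy => not_lt.1 (Ordinal.lt_wf.not_lt_min s hy)⟩

lemma aux_ord_stabilize (f : ℕ → Ordinal) (N : ℕ) (h : ∀ n, N ≤ n → f (n+1) ≤ f n) :
    ∃ N', N ≤ N' ∧ ∀ n, N' ≤ n → f n = f N' := by
  obtain ⟨x, ⟨n', hn'mem, rfl⟩, hmin⟩ :=
    aux_ord_min_mem (s := f '' {n | N ≤ n}) ⟨f N, N, le_refl N, rfl⟩
  have hn'min : ∀ y, N ≤ y → f n' ≤ f y := fun y hy => hmin _ ⟨y, hy, rfl⟩
  have hNn : N ≤ n' := hn'mem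
  refine ⟨n', hNn, fun n hn => ?_⟩
  have key : ∀ m, f (n' + m) = f n' := by
    intro m
    induction m with
    | zero => rfl
    | succ k ih =>
      have h1 : f (n' + k + 1) ≤ f (n' + k) := h _ (by omega)
      rw [ih] at h1
      have h2 : f n' ≤ f (n' + k + 1) := hn'min _ (by omega)
      exact le_antisymm h1 h2
  have := key (n - n')
  rwa [show n' + (n - n') = n by omega] at this

lemma aux_infinite_unbdd {S : Set ℕ} (hS : S.Infinite) : ∀ n, ∃ m, n ≤ m ∧ m ∈ S := by
  intro n
  by_contra h
  push_neg at h
  exact hS (Set.Finite.subset (Set.finite_Iio n)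
    (fun m hm => lt_of_not_ge (fun hle => h m hle hm)))

lemma aux_fiber_infinite {c : ℕ → ℕ} {P : ℕ} (hb : ∀ n, c n ≤ P) {S : Set ℕ}
    (hS : S.Infinite) : ∃ d, (∃ m ∈ S, c m = d) ∧ {m | c m = d}.Infinite := by
  haveI := hS.to_subtype
  obtain ⟨y, hy⟩ := Finite.exists_infinite_fiber
    (fun m : S => (⟨c m, Nat.lt_succ_of_le (hb m)⟩ : Fin (P+1)))
  have hinf : ((fun m : S => (⟨c m, Nat.lt_succ_of_le (hb m)⟩ : Fin (P+1))) ⁻¹' {y}).Infinite :=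
    Set.infinite_coe_iff.1 hy
  refine ⟨y.val, ?_, ?_⟩
  · obtain ⟨⟨m, hm⟩, hmem⟩ := hinf.nonempty
    refine ⟨m, hm, ?_⟩
    have : (⟨c m, Nat.lt_succ_of_le (hb m)⟩ : Fin (P+1)) = y := hmem
    exact congrArg Fin.val this
  · have h2 := hinf.image (Set.injOn_of_injective Subtype.val_injective)
    apply h2.mono
    rintro m ⟨⟨k, hk⟩, hkmem, rfl⟩
    have : (⟨c k, Nat.lt_succ_of_le (hb k)⟩ : Fin (P+1)) = y := hkmem
    exact congrArg Fin.val this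

lemma aux_maxInfOften {c : ℕ → ℕ} {P : ℕ} (hb : ∀ n, c n ≤ P) :
    ∃ μ, InfOften c μ ∧ ∀ d, InfOften c d → d ≤ μ := by
  classical
  obtain ⟨d0, _, hfib⟩ := aux_fiber_infinite hb (Set.infinite_univ (α := ℕ))
  have hd0 : InfOften c d0 := fun n => (aux_infinite_unbdd hfib n).imp fun m hm => ⟨hm.1, hm.2⟩
  have hdP : ∀ d, InfOften c d → d ≤ P := fun d hd => by
    obtain ⟨m, _, hm⟩ := hd 0; exact hm ▸ hb m
  exact ⟨Nat.findGreatest (fun d => InfOften c d) P,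
    Nat.findGreatest_spec (hdP d0 hd0) hd0,
    fun d hd => Nat.le_findGreatest (hdP d hd) hd⟩

lemma aux_wf_of_no_descending {α : Type} {r : α → α → Prop}
    (h : ∀ f : ℕ → α, ¬ ∀ n, r (f (n+1)) (f n)) : WellFounded r := by
  classical
  constructor
  intro a
  by_contra ha
  have key : ∀ x, ¬ Acc r x → ∃ y, r y x ∧ ¬ Acc r y := by
    intro x hx
    by_contra hy
    push_neg at hy
    exact hx (Acc.intro x hy)
  choose f hf1 hf2 using key
  let F : ℕ → {x // ¬ Acc r x} :=
    fun n => Nat.rec ⟨a, ha⟩ (fun _ p => ⟨f p.1 p.2, hf2 p.1 p.2⟩) n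
  exact h (fun n => (F n).1) (fun n => hf1 (F n).1 (F n).2)


section Core

variable {Q : Type} (init : Q) (Ch : (ℕ → Q) → ℕ → Set Q) (pr : ℕ → Q → Q → ℕ)

/-- A node of the strategy tree: `g` is consistent with `Ch` up to time `n`. -/
def CNode (g : ℕ → Q) (n : ℕ) : Prop :=
  g 0 = init ∧ ∀ i, i < n → g (i+1) ∈ Ch g i

/-- `x'` is a descendant of `x` in the strategy tree such that all priorities
in between are at most `o`, with at least one equal to `o`. -/
def CRel (o : ℕ) (x' x : (ℕ → Q) × ℕ) : Prop :=
  CNode init Ch x'.1 x'.2 ∧ CNode init Ch x.1 x.2 ∧ x.2 < x'.2 ∧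
  (∀ i, i ≤ x.2 → x'.1 i = x.1 i) ∧
  (∀ i, x.2 ≤ i → i < x'.2 → pr i (x'.1 i) (x'.1 (i+1)) ≤ o) ∧
  (∃ i, x.2 ≤ i ∧ i < x'.2 ∧ pr i (x'.1 i) (x'.1 (i+1)) = o)

/-- Extension of a node by one move. -/
def cext (g : ℕ → Q) (n : ℕ) (q' : Q) : ℕ → Q := fun i => if i ≤ n then g i else q'

variable {init Ch pr}

lemma cext_le {g : ℕ → Q} {n i : ℕ} (hi : i ≤ n) (q' : Q) : cext g n q' i = g i := if_pos hi

lemma cext_gt {g : ℕ → Q} {n i : ℕ} (hi : n < i) (q' : Q) : cext g n q' i = q' :=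
  if_neg (by omega)

variable (hpd : ∀ g g' n, (∀ i, i ≤ n → g i = g' i) → Ch g n = Ch g' n)

include hpd in
lemma cext_node {g : ℕ → Q} {n : ℕ} (h : CNode init Ch g n) {q' : Q} (hq' : q' ∈ Ch g n) :
    CNode init Ch (cext g n q') (n+1) := by
  constructor
  · rw [cext_le (Nat.zero_le n) q']; exact h.1
  · intro i hi
    have hCh : Ch (cext g n q') i = Ch g i :=
      hpd _ _ _ (fun j hj => cext_le (by omega) q')
    rcases Nat.lt_or_ge i n with hlt | hge
    · rw [cext_le (by omega) q', hCh]
      exact h.2 i hlt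
    · have : i = n := by omega
      subst this
      rw [cext_gt (by omega) q', hCh]
      exact hq'

include hpd in
lemma CRel_wf (hwin : ∀ g, g 0 = init → (∀ n, g (n+1) ∈ Ch g n) →
      ParityAccept (fun n => pr n (g n) (g (n+1))))
    (o : ℕ) (ho : Odd o) : WellFounded (CRel init Ch pr o) := by
  apply aux_wf_of_no_descending
  intro emb hf
  set gg : ℕ → ℕ → Q := fun m => (emb m).1 with hgg
  set nn : ℕ → ℕ := fun m => (emb m).2 with hnn
  have hnode : ∀ m, CNode init Ch (gg m) (nn m) := fun m => (hf m).2.1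
  have hmono : ∀ m, nn m < nn (m+1) := fun m => (hf m).2.2.1
  have hag : ∀ m i, i ≤ nn m → gg (m+1) i = gg m i := fun m => (hf m).2.2.2.1
  have hle : ∀ m i, nn m ≤ i → i < nn (m+1) → pr i (gg (m+1) i) (gg (m+1) (i+1)) ≤ o :=
    fun m => (hf m).2.2.2.2.1
  have hex : ∀ m, ∃ i, nn m ≤ i ∧ i < nn (m+1) ∧ pr i (gg (m+1) i) (gg (m+1) (i+1)) = o :=
    fun m => (hf m).2.2.2.2.2
  have hmono2 : ∀ m m', m ≤ m' → nn m ≤ nn m' := by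
    intro m m' h
    induction m' with
    | zero => have : m = 0 := by omega
              simp [this]
    | succ k ih =>
      rcases Nat.lt_or_ge m (k+1) with hlt | hge
      · exact le_trans (ih (by omega)) (le_of_lt (hmono k))
      · have : m = k + 1 := by omega
        simp [this]
  have hgrow : ∀ m, m ≤ nn m := by
    intro m
    induction m with
    | zero => exact Nat.zero_le _
    | succ k ih => have := hmono k; omega
  have hagree : ∀ m m', m ≤ m' → ∀ i, i ≤ nn m → gg m' i = gg m i := by
    intro m m' h
    induction m' with
    | zero => have : m = 0 := by omega
              simp [this]
    | succ k ih =>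
      rcases Nat.lt_or_ge m (k+1) with hlt | hge
      · intro i hi
        have h1 : i ≤ nn k := le_trans hi (hmono2 m k (by omega))
        rw [hag k i h1]
        exact ih (by omega) i hi
      · have : m = k + 1 := by omega
        simp [this]
  set G : ℕ → Q := fun i => gg (i+1) i with hG
  have hGg : ∀ m i, i ≤ nn m → G i = gg m i := by
    intro m i hi
    rcases le_total m (i+1) with h | h
    · exact hagree m (i+1) h i hi
    · have h1 : i ≤ nn (i+1) := le_trans (Nat.le_succ i) (hgrow (i+1))
      exact (hagree (i+1) m h i h1).symm
  have hG0 : G 0 = init := by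
    rw [hGg 0 0 (Nat.zero_le _)]
    exact (hnode 0).1
  have hGcons : ∀ i, G (i+1) ∈ Ch G i := by
    intro i
    have h1 : i + 1 ≤ nn (i+1) := hgrow (i+1)
    have e1 : G (i+1) = gg (i+1) (i+1) := hGg (i+1) (i+1) h1
    have e0 : ∀ j, j ≤ i → G j = gg (i+1) j := fun j hj => hGg (i+1) j (by omega)
    have hmem := (hnode (i+1)).2 i (by omega)
    rw [e1, hpd G (gg (i+1)) i e0]
    exact hmem
  obtain ⟨e, he_even, he_inf, he_max⟩ := hwin G hG0 hGcons
  have hbound : ∀ i, nn 0 ≤ i → pr i (G i) (G (i+1)) ≤ o := by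
    intro i hi
    obtain ⟨m, hm1, hm2⟩ : ∃ m, nn m ≤ i ∧ i < nn (m+1) := by
      classical
      have h0 : nn 0 ≤ i := hi
      set m := Nat.findGreatest (fun m => nn m ≤ i) i with hm
      have hmem : nn m ≤ i :=
        Nat.findGreatest_spec (P := fun m => nn m ≤ i) (Nat.zero_le i) h0
      refine ⟨m, hmem, ?_⟩
      by_contra hcon
      push_neg at hcon
      have hb : m + 1 ≤ i := le_trans (hgrow (m+1)) hcon
      have : m + 1 ≤ m := Nat.le_findGreatest (P := fun m => nn m ≤ i) hb hcon
      omega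
    rw [hGg (m+1) i (by omega), hGg (m+1) (i+1) hm2]
    exact hle m i hm1 hm2
  have hinfo : InfOften (fun i => pr i (G i) (G (i+1))) o := by
    intro n
    obtain ⟨i, hi1, hi2, hi3⟩ := hex n
    refine ⟨i, le_trans (le_trans (hgrow n) hi1) (le_refl i), ?_⟩
    simp only []
    rw [hGg (n+1) i (by omega), hGg (n+1) (i+1) hi2]
    exact hi3
  have hoe : o ≤ e := he_max o hinfo
  have hne : o ≠ e := fun h => (Nat.not_odd_iff_even.2 he_even) (h ▸ ho)
  obtain ⟨i, hi1, hi2⟩ := he_inf (nn 0)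
  have := hbound i hi1
  simp only [] at hi2
  omega

include hpd in
lemma rank_child_le {g : ℕ → Q} {n : ℕ} (hnode : CNode init Ch g n) {q' : Q}
    (hq' : q' ∈ Ch g n) {o : ℕ} (hwf : WellFounded (CRel init Ch pr o))
    (hc : pr n (g n) q' ≤ o) :
    hwf.rank (cext g n q', n+1) ≤ hwf.rank (g, n) := by
  apply aux_rank_le_of_subrel
  rintro ⟨h, m⟩ ⟨hz1, hz2, hz3, hz4, hz5, hz6⟩
  simp only at hz3 hz4 hz5 hz6 ⊢
  refine ⟨hz1, hnode, by omega, ?_, ?_, ?_⟩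
  · intro i hi
    dsimp only at hi ⊢
    rw [hz4 i (by omega)]
    exact cext_le hi q'
  · intro i hi1 hi2
    dsimp only at hi1 hi2 ⊢
    rcases Nat.lt_or_ge i (n+1) with hlt | hge
    · have hin : i = n := by omega
      subst hin
      rw [hz4 i (by omega), hz4 (i+1) (by omega), cext_le (le_refl i) q', cext_gt (by omega) q']
      exact hc
    · exact hz5 i hge hi2
  · obtain ⟨i, h1, h2, h3⟩ := hz6
    exact ⟨i, by omega, h2, h3⟩

include hpd in
lemma rank_child_lt {g : ℕ → Q} {n : ℕ} (hnode : CNode init Ch g n) {q' : Q}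
    (hq' : q' ∈ Ch g n) {o : ℕ} (hwf : WellFounded (CRel init Ch pr o))
    (hc : pr n (g n) q' = o) :
    hwf.rank (cext g n q', n+1) < hwf.rank (g, n) := by
  apply hwf.rank_lt_of_rel
  refine ⟨cext_node hpd hnode hq', hnode, by omega, ?_, ?_, ?_⟩
  · intro i hi
    exact cext_le hi q'
  · intro i hi1 hi2
    simp only at hi1 hi2
    have hin : i = n := by omega
    subst hin
    show pr i (cext g i q' i) (cext g i q' (i+1)) ≤ o
    rw [cext_le (le_refl i) q', cext_gt (by omega) q']
    omega
  · refine ⟨n, le_refl n, by omega, ?_⟩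
    show pr n (cext g n q' n) (cext g n q' (n+1)) = o
    rw [cext_le (le_refl n) q', cext_gt (by omega) q']
    exact hc

end Core


section Core2

open scoped Classical

/-- The rank of a node for the odd priority `o` (0 if `o` is even or the
relation is not well-founded). -/
noncomputable def crk {Q : Type} (init : Q) (Ch : (ℕ → Q) → ℕ → Set Q) (pr : ℕ → Q → Q → ℕ)
    (o : ℕ) (x : (ℕ → Q) × ℕ) : Ordinal :=
  if h : Odd o ∧ WellFounded (CRel init Ch pr o) then h.2.rank x else 0

/-- The nodes of the strategy tree at position `(n, q)`. -/
def CS0 {Q : Type} (init : Q) (Ch : (ℕ → Q) → ℕ → Set Q) (n : ℕ) (q : Q) : Set (ℕ → Q) :=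
  {g | CNode init Ch g n ∧ g n = q}

/-- Iterated hierarchical minimisation of the ranks over the nodes at a
position, from the highest priority down. -/
noncomputable def CStage {Q : Type} (init : Q) (Ch : (ℕ → Q) → ℕ → Set Q) (pr : ℕ → Q → Q → ℕ)
    (P n : ℕ) (q : Q) : ℕ → Set (ℕ → Q)
  | 0 => CS0 init Ch n q
  | (j+1) => {g ∈ CStage init Ch pr P n q j |
      ∀ g' ∈ CStage init Ch pr P n q j,
        crk init Ch pr (P - j) (g, n) ≤ crk init Ch pr (P - j) (g', n)}

variable {Q : Type} {init : Q} {Ch : (ℕ → Q) → ℕ → Set Q} {pr : ℕ → Q → Q → ℕ}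

lemma crk_odd {o : ℕ} (ho : Odd o) (hwf : WellFounded (CRel init Ch pr o))
    (x : (ℕ → Q) × ℕ) : crk init Ch pr o x = hwf.rank x := dif_pos ⟨ho, hwf⟩

lemma crk_even {o : ℕ} (ho : ¬ Odd o) (x : (ℕ → Q) × ℕ) : crk init Ch pr o x = 0 := by
  rw [crk, dif_neg]
  intro hc
  exact ho hc.1

lemma crk_big {P o : ℕ} (hP : ∀ n q q', pr n q q' ≤ P) (ho : P < o) (x : (ℕ → Q) × ℕ) :
    crk init Ch pr o x = 0 := by
  rw [crk]
  split
  · next h =>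
    apply aux_rank_eq_zero
    rintro z ⟨_, _, _, _, _, i, _, _, hi3⟩
    have := hP i (z.1 i) (z.1 (i+1))
    omega
  · rfl

lemma CStage_ne {P n : ℕ} {q : Q} (h0 : (CS0 init Ch n q).Nonempty) (j : ℕ) :
    (CStage init Ch pr P n q j).Nonempty := by
  induction j with
  | zero => exact h0
  | succ k ih =>
    obtain ⟨x, ⟨g0, hg0, rfl⟩, hxmin⟩ :=
      aux_ord_min_mem (s := (fun g => crk init Ch pr (P - k) (g, n)) '' CStage init Ch pr P n q k)
        (ih.image _)
    exact ⟨g0, hg0, fun g' hg' => hxmin _ ⟨g', hg', rfl⟩⟩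

lemma CStage_mono {P n : ℕ} {q : Q} {j j' : ℕ} (h : j ≤ j') :
    CStage init Ch pr P n q j' ⊆ CStage init Ch pr P n q j := by
  induction j' with
  | zero =>
    have : j = 0 := by omega
    subst this; exact fun _ h => h
  | succ k ih =>
    rcases Nat.lt_or_ge j (k+1) with hlt | hge
    · exact fun g hg => ih (by omega) hg.1
    · have : j = k+1 := by omega
      subst this; exact fun _ h => h

lemma CStage_eq {P n : ℕ} {q : Q} {j : ℕ} {g g' : ℕ → Q}
    (hg : g ∈ CStage init Ch pr P n q (j+1)) (hg' : g' ∈ CStage init Ch pr P n q (j+1)) :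
    crk init Ch pr (P - j) (g, n) = crk init Ch pr (P - j) (g', n) :=
  le_antisymm (hg.2 g' hg'.1) (hg'.2 g hg.1)

variable (init Ch pr) in
/-- The chosen (hierarchically minimal) node at a position. -/
noncomputable def cgmin (P n : ℕ) (q : Q) (h : (CS0 init Ch n q).Nonempty) : ℕ → Q :=
  (CStage_ne (pr := pr) (P := P) h (P+1)).choose

lemma cgmin_mem {P n : ℕ} {q : Q} (h : (CS0 init Ch n q).Nonempty) :
    cgmin init Ch pr P n q h ∈ CStage init Ch pr P n q (P+1) :=
  (CStage_ne (pr := pr) (P := P) h (P+1)).choose_spec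

lemma cgmin_S0 {P n : ℕ} {q : Q} (h : (CS0 init Ch n q).Nonempty) :
    cgmin init Ch pr P n q h ∈ CS0 init Ch n q :=
  CStage_mono (Nat.zero_le _) (cgmin_mem h)

/-- The chosen node is lexicographically minimal: any other node at the same
position either has identical ranks, or its ranks agree above some odd `o'`
where it is strictly larger. -/
lemma cgmin_lexmin {P n : ℕ} {q : Q} (hP : ∀ n q q', pr n q q' ≤ P)
    (h : (CS0 init Ch n q).Nonempty) {g' : ℕ → Q} (hg' : g' ∈ CS0 init Ch n q) :
    (∀ o, crk init Ch pr o (g', n) = crk init Ch pr o (cgmin init Ch pr P n q h, n)) ∨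
    (∃ o', Odd o' ∧
      crk init Ch pr o' (cgmin init Ch pr P n q h, n) < crk init Ch pr o' (g', n) ∧
      ∀ o, o' < o → crk init Ch pr o (g', n) = crk init Ch pr o (cgmin init Ch pr P n q h, n)) := by
  classical
  by_cases hall : ∀ j, j ≤ P → g' ∈ CStage init Ch pr P n q (j+1)
  · left
    intro o
    rcases Nat.lt_or_ge P o with ho | ho
    · rw [crk_big hP ho, crk_big hP ho]
    · have h1 : g' ∈ CStage init Ch pr P n q (P - o + 1) := hall _ (by omega)
      have h2 : cgmin init Ch pr P n q h ∈ CStage init Ch pr P n q (P - o + 1) :=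
        CStage_mono (by omega) (cgmin_mem h)
      have := CStage_eq h1 h2
      rwa [show P - (P - o) = o by omega] at this
  · push_neg at hall
    obtain ⟨j0, hj0P, hj0⟩ := hall
    have hex : ∃ j, g' ∉ CStage init Ch pr P n q (j+1) := ⟨j0, hj0⟩
    have hjsP : Nat.find hex ≤ P := le_trans (Nat.find_min' hex hj0) hj0P
    set js := Nat.find hex with hjs
    have hjsmem : g' ∈ CStage init Ch pr P n q js := by
      rcases Nat.eq_zero_or_pos js with h0 | h0
      · rw [h0]; exact hg'
      · have hmin := Nat.find_min hex (m := js - 1) (by omega)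
        rw [show js - 1 + 1 = js by omega] at hmin
        exact not_not.1 hmin
    have hjsnot : g' ∉ CStage init Ch pr P n q (js+1) := Nat.find_spec hex
    have hex2 : ∃ g'' ∈ CStage init Ch pr P n q js,
        crk init Ch pr (P - js) (g'', n) < crk init Ch pr (P - js) (g', n) := by
      by_contra hc
      push_neg at hc
      exact hjsnot ⟨hjsmem, fun g'' hg'' => hc g'' hg''⟩
    obtain ⟨g'', hg''mem, hg''lt⟩ := hex2
    have hminle : crk init Ch pr (P - js) (cgmin init Ch pr P n q h, n) ≤
        crk init Ch pr (P - js) (g'', n) :=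
      (CStage_mono (show js + 1 ≤ P + 1 by omega) (cgmin_mem h)).2 g'' hg''mem
    have hstrict := lt_of_le_of_lt hminle hg''lt
    right
    refine ⟨P - js, ?_, hstrict, ?_⟩
    · by_contra hodd
      rw [crk_even hodd, crk_even hodd] at hstrict
      exact lt_irrefl 0 hstrict
    · intro o hoo
      rcases Nat.lt_or_ge P o with hoP | hoP
      · rw [crk_big hP hoP, crk_big hP hoP]
      · have hj : P - o < js := by omega
        have h1 : g' ∈ CStage init Ch pr P n q (P - o + 1) := not_not.1 (Nat.find_min hex hj)
        have h2 : cgmin init Ch pr P n q h ∈ CStage init Ch pr P n q (P - o + 1) :=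
          CStage_mono (by omega) (cgmin_mem h)
        have := CStage_eq h1 h2
        rwa [show P - (P - o) = o by omega] at this

end Core2


/-- Main combinatorial lemma: if Eve wins the (history-dependent) tree game,
then there is a positional (per-position) strategy all whose plays are
parity-accepting. -/
theorem core_positional {Q : Type} (init : Q) (Ch : (ℕ → Q) → ℕ → Set Q)
    (pr : ℕ → Q → Q → ℕ) (P : ℕ) (hP : ∀ n q q', pr n q q' ≤ P)
    (hpd : ∀ g g' n, (∀ i, i ≤ n → g i = g' i) → Ch g n = Ch g' n)
    (E : ℕ → Q → Set (Set Q)) (hE0 : ∀ n q, (E n q).Nonempty)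
    (hECh : ∀ g n, CNode init Ch g n → Ch g n ∈ E n (g n))
    (hwin : ∀ g, g 0 = init → (∀ n, g (n+1) ∈ Ch g n) →
      ParityAccept (fun n => pr n (g n) (g (n+1)))) :
    ∃ b : ℕ → Q → Set Q, (∀ n q, b n q ∈ E n q) ∧
      ∀ g : ℕ → Q, g 0 = init → (∀ n, g (n+1) ∈ b n (g n)) →
        ParityAccept (fun n => pr n (g n) (g (n+1))) := by
  classical
  have wfo : ∀ o, Odd o → WellFounded (CRel init Ch pr o) :=
    fun o ho => CRel_wf hpd hwin o ho
  refine ⟨fun n q => if h : (CS0 init Ch n q).Nonempty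
    then Ch (cgmin init Ch pr P n q h) n else (hE0 n q).choose, ?_, ?_⟩
  · intro n q
    show (if h : (CS0 init Ch n q).Nonempty
      then Ch (cgmin init Ch pr P n q h) n else (hE0 n q).choose) ∈ E n q
    by_cases h : (CS0 init Ch n q).Nonempty
    · rw [dif_pos h]
      have h1 := cgmin_S0 (pr := pr) (P := P) h
      have h2 := hECh (cgmin init Ch pr P n q h) n h1.1
      rwa [h1.2] at h2
    · rw [dif_neg h]
      exact (hE0 n q).choose_spec
  intro g hg0 hgb
  by_contra hrej
  have H : ∀ n, (CS0 init Ch n (g n)).Nonempty := by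
    intro n
    induction n with
    | zero =>
      exact ⟨fun _ => init, ⟨rfl, fun i hi => absurd hi (Nat.not_lt_zero i)⟩, hg0.symm⟩
    | succ k ih =>
      have hmem := cgmin_S0 (pr := pr) (P := P) ih
      have hq : g (k+1) ∈ Ch (cgmin init Ch pr P k (g k) ih) k := by
        have hb : g (k+1) ∈ (if h : (CS0 init Ch k (g k)).Nonempty
            then Ch (cgmin init Ch pr P k (g k) h) k else (hE0 k (g k)).choose) := hgb k
        rw [dif_pos ih] at hb
        exact hb
      exact ⟨cext (cgmin init Ch pr P k (g k) ih) k (g (k+1)),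
        cext_node hpd hmem.1 hq, cext_gt (by omega) _⟩
  have hq' : ∀ n, g (n+1) ∈ Ch (cgmin init Ch pr P n (g n) (H n)) n := by
    intro n
    have hb : g (n+1) ∈ (if h : (CS0 init Ch n (g n)).Nonempty
        then Ch (cgmin init Ch pr P n (g n) h) n else (hE0 n (g n)).choose) := hgb n
    rw [dif_pos (H n)] at hb
    exact hb
  have hXS0 : ∀ n, cgmin init Ch pr P n (g n) (H n) ∈ CS0 init Ch n (g n) :=
    fun n => cgmin_S0 (H n)
  have hY : ∀ n, cext (cgmin init Ch pr P n (g n) (H n)) n (g (n+1)) ∈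
      CS0 init Ch (n+1) (g (n+1)) :=
    fun n => ⟨cext_node hpd (hXS0 n).1 (hq' n), cext_gt (by omega) _⟩
  have F1 : ∀ n o, Odd o → pr n (g n) (g (n+1)) ≤ o →
      crk init Ch pr o (cext (cgmin init Ch pr P n (g n) (H n)) n (g (n+1)), n+1) ≤
        crk init Ch pr o (cgmin init Ch pr P n (g n) (H n), n) := by
    intro n o ho hc
    rw [crk_odd ho (wfo o ho), crk_odd ho (wfo o ho)]
    have hc' : pr n (cgmin init Ch pr P n (g n) (H n) n) (g (n+1)) ≤ o := by
      rw [(hXS0 n).2]; exact hc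
    exact rank_child_le hpd (hXS0 n).1 (hq' n) (wfo o ho) hc'
  have F1s : ∀ n o, Odd o → pr n (g n) (g (n+1)) = o →
      crk init Ch pr o (cext (cgmin init Ch pr P n (g n) (H n)) n (g (n+1)), n+1) <
        crk init Ch pr o (cgmin init Ch pr P n (g n) (H n), n) := by
    intro n o ho hc
    rw [crk_odd ho (wfo o ho), crk_odd ho (wfo o ho)]
    have hc' : pr n (cgmin init Ch pr P n (g n) (H n) n) (g (n+1)) = o := by
      rw [(hXS0 n).2]; exact hc
    exact rank_child_lt hpd (hXS0 n).1 (hq' n) (wfo o ho) hc'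
  have F2 : ∀ n,
      (∀ o, crk init Ch pr o (cext (cgmin init Ch pr P n (g n) (H n)) n (g (n+1)), n+1) =
        crk init Ch pr o (cgmin init Ch pr P (n+1) (g (n+1)) (H (n+1)), n+1)) ∨
      (∃ o', Odd o' ∧
        crk init Ch pr o' (cgmin init Ch pr P (n+1) (g (n+1)) (H (n+1)), n+1) <
          crk init Ch pr o' (cext (cgmin init Ch pr P n (g n) (H n)) n (g (n+1)), n+1) ∧
        ∀ o, o' < o →
          crk init Ch pr o (cext (cgmin init Ch pr P n (g n) (H n)) n (g (n+1)), n+1) =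
            crk init Ch pr o (cgmin init Ch pr P (n+1) (g (n+1)) (H (n+1)), n+1)) :=
    fun n => cgmin_lexmin hP (H (n+1)) (hY n)
  have hccP : ∀ n, pr n (g n) (g (n+1)) ≤ P := fun n => hP n _ _
  obtain ⟨μ, hμinf, hμmax⟩ := aux_maxInfOften hccP
  have hμodd : Odd μ := by
    rw [← Nat.not_even_iff_odd]
    intro he
    exact hrej ⟨μ, he, hμinf, hμmax⟩
  have hNex : ∃ N, ∀ n, N ≤ n → pr n (g n) (g (n+1)) ≤ μ := by
    by_cases hS : {n | μ < pr n (g n) (g (n+1))}.Infinite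
    · exfalso
      obtain ⟨d, ⟨m, hm, hmd⟩, hfib⟩ := aux_fiber_infinite hccP hS
      have hd : InfOften (fun n => pr n (g n) (g (n+1))) d :=
        fun n => (aux_infinite_unbdd hfib n).imp fun k hk => ⟨hk.1, hk.2⟩
      have h1 := hμmax d hd
      have h2 : μ < d := hmd ▸ hm
      omega
    · have hf : {n | μ < pr n (g n) (g (n+1))}.Finite := Set.not_infinite.1 hS
      obtain ⟨N, hN⟩ := hf.bddAbove
      refine ⟨N+1, fun n hn => ?_⟩
      by_contra hc
      push_neg at hc
      have := hN (show n ∈ {n | μ < pr n (g n) (g (n+1))} from hc)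
      omega
  obtain ⟨N, hN⟩ := hNex
  have stab : ∀ t o, Odd o → μ < o → P + 1 - o ≤ t →
      ∃ N', N ≤ N' ∧ ∀ n, N' ≤ n →
        crk init Ch pr o (cgmin init Ch pr P (n+1) (g (n+1)) (H (n+1)), n+1) =
          crk init Ch pr o (cgmin init Ch pr P n (g n) (H n), n) := by
    intro t
    induction t with
    | zero =>
      intro o ho hμo hto
      refine ⟨N, le_refl N, fun n _ => ?_⟩
      rw [crk_big hP (by omega), crk_big hP (by omega)]
    | succ t ih =>
      intro o ho hμo hto
      by_cases hle : P + 1 - o ≤ t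
      · exact ih o ho hμo hle
      · have ih' : ∀ o'', Odd o'' → o < o'' →
            ∃ N', N ≤ N' ∧ ∀ n, N' ≤ n →
              crk init Ch pr o'' (cgmin init Ch pr P (n+1) (g (n+1)) (H (n+1)), n+1) =
                crk init Ch pr o'' (cgmin init Ch pr P n (g n) (H n), n) := by
          intro o'' h1 h2
          exact ih o'' h1 (by omega) (by omega)
        choose Fc hFc1 hFc2 using ih'
        have hconst : ∀ o'', Odd o'' → o < o'' → ∀ n,
            max N (Finset.sup (Finset.range (P+2)) (fun o'' =>
              if h : Odd o'' ∧ o < o'' then Fc o'' h.1 h.2 else 0)) ≤ n →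
            crk init Ch pr o'' (cgmin init Ch pr P (n+1) (g (n+1)) (H (n+1)), n+1) =
              crk init Ch pr o'' (cgmin init Ch pr P n (g n) (H n), n) := by
          intro o'' h1 h2 n hn
          rcases Nat.lt_or_ge P o'' with hbig | hsm
          · rw [crk_big hP hbig, crk_big hP hbig]
          · apply hFc2 o'' h1 h2
            have hmem : o'' ∈ Finset.range (P+2) := Finset.mem_range.2 (by omega)
            have hle2 := Finset.le_sup (f := fun o'' =>
              if h : Odd o'' ∧ o < o'' then Fc o'' h.1 h.2 else 0) hmem
            have hle3 : (if h : Odd o'' ∧ o < o'' then Fc o'' h.1 h.2 else 0) ≤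
                Finset.sup (Finset.range (P+2)) (fun o'' =>
                  if h : Odd o'' ∧ o < o'' then Fc o'' h.1 h.2 else 0) := hle2
            rw [dif_pos (⟨h1, h2⟩ : Odd o'' ∧ o < o'')] at hle3
            exact le_trans hle3 (le_trans (le_max_right _ _) hn)
        have hdec : ∀ n,
            max N (Finset.sup (Finset.range (P+2)) (fun o'' =>
              if h : Odd o'' ∧ o < o'' then Fc o'' h.1 h.2 else 0)) ≤ n →
            crk init Ch pr o (cgmin init Ch pr P (n+1) (g (n+1)) (H (n+1)), n+1) ≤
              crk init Ch pr o (cgmin init Ch pr P n (g n) (H n), n) := by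
          intro n hn
          have hccn : pr n (g n) (g (n+1)) ≤ μ := hN n (le_trans (le_max_left _ _) hn)
          rcases F2 n with heq | ⟨o', h1, h2, h3⟩
          · rw [← heq o]
            exact F1 n o ho (by omega)
          · rcases lt_trichotomy o' o with hlt | heq' | hgt
            · rw [← h3 o hlt]
              exact F1 n o ho (by omega)
            · subst heq'
              exact le_of_lt (lt_of_lt_of_le h2 (F1 n o' ho (by omega)))
            · exfalso
              have e1 := hconst o' h1 hgt n hn
              have e2 := F1 n o' h1 (by omega)
              rw [e1] at h2
              exact absurd (lt_of_lt_of_le h2 e2) (lt_irrefl _)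
        obtain ⟨N1, hN1a, hN1b⟩ := aux_ord_stabilize
          (fun n => crk init Ch pr o (cgmin init Ch pr P n (g n) (H n), n)) _ hdec
        refine ⟨N1, le_trans (le_max_left _ _) hN1a, fun n hn => ?_⟩
        have e1 := hN1b (n+1) (by omega)
        have e2 := hN1b n hn
        rw [e1, e2]
  have stabAll : ∃ Ns, N ≤ Ns ∧ ∀ o n, Odd o → μ < o → Ns ≤ n →
      crk init Ch pr o (cgmin init Ch pr P (n+1) (g (n+1)) (H (n+1)), n+1) =
        crk init Ch pr o (cgmin init Ch pr P n (g n) (H n), n) := by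
    have h' : ∀ o, Odd o → μ < o → ∃ N', N ≤ N' ∧ ∀ n, N' ≤ n →
        crk init Ch pr o (cgmin init Ch pr P (n+1) (g (n+1)) (H (n+1)), n+1) =
          crk init Ch pr o (cgmin init Ch pr P n (g n) (H n), n) :=
      fun o h1 h2 => stab (P+1) o h1 h2 (by omega)
    choose Fc hFc1 hFc2 using h'
    refine ⟨max N (Finset.sup (Finset.range (P+2)) (fun o =>
      if h : Odd o ∧ μ < o then Fc o h.1 h.2 else 0)), le_max_left _ _, ?_⟩
    intro o n h1 h2 hn
    rcases Nat.lt_or_ge P o with hbig | hsm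
    · rw [crk_big hP hbig, crk_big hP hbig]
    · apply hFc2 o h1 h2
      have hmem : o ∈ Finset.range (P+2) := Finset.mem_range.2 (by omega)
      have hle2 := Finset.le_sup (f := fun o =>
        if h : Odd o ∧ μ < o then Fc o h.1 h.2 else 0) hmem
      have hle3 : (if h : Odd o ∧ μ < o then Fc o h.1 h.2 else 0) ≤
          Finset.sup (Finset.range (P+2)) (fun o =>
            if h : Odd o ∧ μ < o then Fc o h.1 h.2 else 0) := hle2
      rw [dif_pos (⟨h1, h2⟩ : Odd o ∧ μ < o)] at hle3
      exact le_trans hle3 (le_trans (le_max_right _ _) hn)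
  obtain ⟨Ns, hNsN, hNs⟩ := stabAll
  have hdecμ : ∀ n, Ns ≤ n →
      crk init Ch pr μ (cgmin init Ch pr P (n+1) (g (n+1)) (H (n+1)), n+1) ≤
        crk init Ch pr μ (cgmin init Ch pr P n (g n) (H n), n) ∧
      (pr n (g n) (g (n+1)) = μ →
        crk init Ch pr μ (cgmin init Ch pr P (n+1) (g (n+1)) (H (n+1)), n+1) <
          crk init Ch pr μ (cgmin init Ch pr P n (g n) (H n), n)) := by
    intro n hn
    have hccn : pr n (g n) (g (n+1)) ≤ μ := hN n (le_trans hNsN hn)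
    have hF1 := F1 n μ hμodd hccn
    have hF1s := fun hc => F1s n μ hμodd hc
    rcases F2 n with heq | ⟨o', h1, h2, h3⟩
    · rw [← heq μ]
      exact ⟨hF1, hF1s⟩
    · rcases lt_trichotomy o' μ with hlt | heq' | hgt
      · rw [← h3 μ hlt]
        exact ⟨hF1, hF1s⟩
      · subst heq'
        have hlt2 := lt_of_lt_of_le h2 hF1
        exact ⟨le_of_lt hlt2, fun _ => hlt2⟩
      · exfalso
        have e1 := hNs o' n h1 hgt hn
        have e2 := F1 n o' h1 (by omega)
        rw [e1] at h2
        exact absurd (lt_of_lt_of_le h2 e2) (lt_irrefl _)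
  obtain ⟨N1, hN1a, hN1b⟩ := aux_ord_stabilize
    (fun n => crk init Ch pr μ (cgmin init Ch pr P n (g n) (H n), n)) Ns
    (fun n hn => (hdecμ n hn).1)
  obtain ⟨m, hm1, hm2⟩ := hμinf N1
  have hstr := (hdecμ m (le_trans hN1a hm1)).2 hm2
  have e1 := hN1b (m+1) (by omega)
  have e2 := hN1b m hm1
  rw [e1, e2] at hstr
  exact lt_irrefl _ hstr


/-! ### Plumbing: extracting a tree strategy from the model-checking game -/

lemma eveRes_nonempty {Q : Type} (φ : PosBool Q) : φ.eveRes.Nonempty := by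
  induction φ with
  | atom q => exact ⟨{q}, rfl⟩
  | and f g ihf ihg =>
    obtain ⟨u, hu⟩ := ihf
    obtain ⟨v, hv⟩ := ihg
    exact ⟨u ∪ v, u, hu, v, hv, rfl⟩
  | or f g ihf ihg =>
    obtain ⟨u, hu⟩ := ihf
    exact ⟨u, Or.inl hu⟩

lemma hist_succ {St α1 β1 α2 β2 α3 β3 : Type}
    (ρ : ℕ → GameRound St α1 β1 α2 β2 α3 β3) (n : ℕ) :
    Game.hist ρ (n+1) = Game.hist ρ n ++ [ρ n] := by
  rw [Game.hist, Game.hist, List.range_succ, List.map_append, List.map_singleton]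

/-- The reconstructed history of the model-checking game along a sequence of
Adam's moves. -/
noncomputable def mcHist {A : Type} (M : AltAut A)
    (σ : Game.EStrat (ℕ × M.Q) Unit (Set M.Q) M.Q Unit Unit Unit) (g : ℕ → M.Q) :
    ℕ → List (GameRound (ℕ × M.Q) Unit (Set M.Q) M.Q Unit Unit Unit)
  | 0 => []
  | n+1 => mcHist M σ g n ++
      [⟨(n, g n), (), σ.f1 (mcHist M σ g n) (n, g n) (), g (n+1), (), (), ()⟩]

/-- The tree strategy induced by a strategy in the model-checking game. -/
noncomputable def mcCh {A : Type} (M : AltAut A)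
    (σ : Game.EStrat (ℕ × M.Q) Unit (Set M.Q) M.Q Unit Unit Unit)
    (g : ℕ → M.Q) (n : ℕ) : Set M.Q :=
  σ.f1 (mcHist M σ g n) (n, g n) ()

lemma mcHist_pd {A : Type} (M : AltAut A)
    (σ : Game.EStrat (ℕ × M.Q) Unit (Set M.Q) M.Q Unit Unit Unit)
    (g g' : ℕ → M.Q) (n : ℕ) (h : ∀ i, i ≤ n → g i = g' i) :
    mcHist M σ g n = mcHist M σ g' n := by
  induction n with
  | zero => rfl
  | succ k ih =>
    have e1 : g k = g' k := h k (by omega)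
    have e2 : g (k+1) = g' (k+1) := h (k+1) (by omega)
    have e3 := ih (fun i hi => h i (by omega))
    rw [mcHist, mcHist, e1, e2, e3]

lemma mcCh_pd {A : Type} (M : AltAut A)
    (σ : Game.EStrat (ℕ × M.Q) Unit (Set M.Q) M.Q Unit Unit Unit)
    (g g' : ℕ → M.Q) (n : ℕ) (h : ∀ i, i ≤ n → g i = g' i) :
    mcCh M σ g n = mcCh M σ g' n := by
  rw [mcCh, mcCh, mcHist_pd M σ g g' n h, h n (le_refl n)]

lemma mcGame_key {A : Type} (M : AltAut A) (w : ℕ → A)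
    (σ : Game.EStrat (ℕ × M.Q) Unit (Set M.Q) M.Q Unit Unit Unit)
    (hσ : Game.EveWinningStrat (M.mcGame w) σ) :
    (∀ g n, CNode M.init (mcCh M σ) g n →
      mcCh M σ g n ∈ PosBool.eveRes (M.delta (g n) (w n))) ∧
    (∀ g, g 0 = M.init → (∀ n, g (n+1) ∈ mcCh M σ g n) →
      M.acc (fun n => (g n, w n, g (n+1)))) := by
  have build : ∀ g : ℕ → M.Q, g 0 = M.init →
      Game.StateOk (M.mcGame w) (fun n => ⟨(n, g n), (), mcCh M σ g n, g (n+1), (), (), ()⟩) ∧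
      Game.ConsE σ (fun n => ⟨(n, g n), (), mcCh M σ g n, g (n+1), (), (), ()⟩) := by
    intro g hg0
    set ρ : ℕ → GameRound (ℕ × M.Q) Unit (Set M.Q) M.Q Unit Unit Unit :=
      fun n => ⟨(n, g n), (), mcCh M σ g n, g (n+1), (), (), ()⟩ with hρ
    have hhist : ∀ n, Game.hist ρ n = mcHist M σ g n := by
      intro n
      induction n with
      | zero => rfl
      | succ k ih =>
        rw [hist_succ, ih]
        rfl
    constructor
    · constructor
      · show ((0 : ℕ), g 0) = ((0 : ℕ), M.init)
        rw [hg0]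
      · intro n
        rfl
    · intro n
      refine ⟨?_, Subsingleton.elim _ _, Subsingleton.elim _ _⟩
      show mcCh M σ g n = σ.f1 (Game.hist ρ n) (n, g n) ()
      rw [hhist, mcCh]
  have legal : ∀ g : ℕ → M.Q, g 0 = M.init → ∀ n, CNode M.init (mcCh M σ) g n →
      Game.Hleg (M.mcGame w)
        (fun n => ⟨(n, g n), (), mcCh M σ g n, g (n+1), (), (), ()⟩) n := by
    intro g hg0 n hnode
    obtain ⟨hst, hcons⟩ := build g hg0
    have hwp := hσ _ hst hcons
    intro m hm
    induction m using Nat.strong_induction_on with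
    | _ m ih =>
    refine ⟨Set.mem_univ _, ?_, hnode.2 m hm, Set.mem_univ _, Set.mem_univ _, Set.mem_univ _⟩
    exact hwp.1 m (fun k hk => ih k hk (by omega)) (Set.mem_univ _)
  constructor
  · intro g n hnode
    have hg0 := hnode.1
    obtain ⟨hst, hcons⟩ := build g hg0
    have hwp := hσ _ hst hcons
    have hleg : Game.Hleg (M.mcGame w)
        (fun n => ⟨(n, g n), (), mcCh M σ g n, g (n+1), (), (), ()⟩) n := by
      intro m hm
      exact legal g hg0 n hnode m hm
    exact hwp.1 n hleg (Set.mem_univ _)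
  · intro g hg0 hcons
    obtain ⟨hst, hconsE⟩ := build g hg0
    have hwp := hσ _ hst hconsE
    have hnode : ∀ n, CNode M.init (mcCh M σ) g n :=
      fun n => ⟨hg0, fun i _ => hcons i⟩
    have hleg : ∀ m, Game.RoundLegal (M.mcGame w)
        (fun n => ⟨(n, g n), (), mcCh M σ g n, g (n+1), (), (), ()⟩) m := by
      intro m
      exact legal g hg0 (m+1) (hnode (m+1)) m (by omega)
    exact hwp.2.2.2 hleg

/-- `L(M) ⊆ L(M^□)`. -/
lemma lang_subset_boxNPA {Alph : Type} (M : AltAut Alph) [Finite Alph] [Finite M.Q]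
    (p : M.Q → Alph → M.Q → ℕ) (hp : M.IsParity p)
    (B : DPA M.Boxes) (hB : B.Lang = M.UnivAccLang) (w : ℕ → Alph) (hw : w ∈ M.Lang) :
    w ∈ (boxNPA M B).Lang := by
  obtain ⟨σ, hσ⟩ := hw
  obtain ⟨hE, hwin'⟩ := mcGame_key M w σ hσ
  obtain ⟨P, hP⟩ : ∃ P, ∀ q a q', p q a q' ≤ P := by
    have hfin : (Set.range (fun x : M.Q × Alph × M.Q => p x.1 x.2.1 x.2.2)).Finite :=
      Set.finite_range _
    obtain ⟨P, hP⟩ := hfin.bddAbove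
    exact ⟨P, fun q a q' => hP ⟨(q, a, q'), rfl⟩⟩
  have hwin : ∀ g : ℕ → M.Q, g 0 = M.init → (∀ n, g (n+1) ∈ mcCh M σ g n) →
      ParityAccept (fun n => p (g n) (w n) (g (n+1))) := by
    intro g h0 hc
    exact (hp _).1 (hwin' g h0 hc)
  obtain ⟨b, hbE, hbwin⟩ := core_positional M.init (mcCh M σ)
    (fun n q q' => p q (w n) q') P (fun n q q' => hP q (w n) q')
    (fun g g' n h => mcCh_pd M σ g g' n h)
    (fun n q => PosBool.eveRes (M.delta q (w n)))
    (fun n q => eveRes_nonempty _) hE hwin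
  have hbox : ∀ n, M.IsBox (w n) (b n) := fun n q => hbE n q
  have huU : (fun n => (⟨(w n, b n), hbox n⟩ : M.Boxes)) ∈ M.UnivAccLang := by
    intro ρq h0 hstep
    exact (hp _).2 (hbwin ρq h0 hstep)
  have huL : (fun n => (⟨(w n, b n), hbox n⟩ : M.Boxes)) ∈ B.Lang := by
    rw [hB]
    exact huU
  refine ⟨fun n => (B.run (fun n => (⟨(w n, b n), hbox n⟩ : M.Boxes)) n,
    (⟨(w n, b n), hbox n⟩ : M.Boxes)), ⟨rfl, fun n => rfl, fun n => rfl⟩, ?_⟩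
  exact huL


/-- Folding the GFG strategy of `A^□` over a list of letters: returns the
current state of `B` and the history of the letter game of `A^□`. -/
noncomputable def bhFold {Alph : Type} (M : AltAut Alph) (B : DPA M.Boxes)
    (σN : Game.EStrat B.S Alph (B.S × M.Boxes) Unit Unit Unit Unit)
    (as : List Alph) :
    B.S × List (GameRound B.S Alph (B.S × M.Boxes) Unit Unit Unit Unit) :=
  as.foldl (fun pr a =>
    ((boxNPA M B).dst (σN.f1 pr.2 pr.1 a),
      pr.2 ++ [⟨pr.1, a, σN.f1 pr.2 pr.1 a, (), (), (), ()⟩])) (B.init, [])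

/-- Eve's strategy in her letter game on `M`, obtained by simulating the GFG
strategy `σN` of `A^□` and applying the chosen boxes to the current state. -/
noncomputable def boxEStrat {Alph : Type} (M : AltAut Alph) (B : DPA M.Boxes)
    (σN : Game.EStrat B.S Alph (B.S × M.Boxes) Unit Unit Unit Unit) :
    Game.EStrat M.Q Alph (Set M.Q) M.Q Unit Unit Unit where
  f1 hs q a :=
    ((σN.f1 (bhFold M B σN (hs.map (fun r => r.a1))).2
      (bhFold M B σN (hs.map (fun r => r.a1))).1 a).2.val.2 q)
  f2 _ _ _ _ _ := ()
  f3 _ _ _ _ _ _ _ := ()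

/-! ### Statement 5

For every alternating parity automaton `A`, if the nondeterministic parity
automaton `A^□` is GFG, then `A` is ∃GFG. -/

theorem existsGFG_of_boxNPA_GFG
    (Alph : Type) (M : AltAut Alph) [Finite Alph] [Finite M.Q]
    (p : M.Q → Alph → M.Q → ℕ) (hp : M.IsParity p)
    (B : DPA M.Boxes) (hB : B.Lang = M.UnivAccLang)
    (hGFG : (boxNPA M B).GFG) :
    M.ExistsGFG := by
  obtain ⟨σN, hσN⟩ := hGFG
  refine ⟨boxEStrat M B σN, ?_⟩
  intro ρ hSt hCons
  -- the companion play of the letter game of `A^□`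
  set ρB : ℕ → GameRound B.S Alph (B.S × M.Boxes) Unit Unit Unit Unit := fun n =>
    ⟨(bhFold M B σN ((List.range n).map (fun i => (ρ i).a1))).1, (ρ n).a1,
     σN.f1 (bhFold M B σN ((List.range n).map (fun i => (ρ i).a1))).2
       (bhFold M B σN ((List.range n).map (fun i => (ρ i).a1))).1 (ρ n).a1,
     (), (), (), ()⟩ with hρB
  have fold_succ : ∀ n, bhFold M B σN ((List.range (n+1)).map (fun i => (ρ i).a1)) =
      ((boxNPA M B).dst (ρB n).e1,
        (bhFold M B σN ((List.range n).map (fun i => (ρ i).a1))).2 ++ [ρB n]) := by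
    intro n
    rw [List.range_succ, List.map_append, List.map_singleton]
    delta bhFold
    rw [List.foldl_concat]
    rfl
  have hhist : ∀ n, Game.hist ρB n =
      (bhFold M B σN ((List.range n).map (fun i => (ρ i).a1))).2 := by
    intro n
    induction n with
    | zero => rfl
    | succ k ih =>
      rw [hist_succ, ih, fold_succ k]
  have hStB : Game.StateOk ((boxNPA M B).letterGame) ρB := by
    constructor
    · rfl
    · intro n
      show (bhFold M B σN ((List.range (n+1)).map (fun i => (ρ i).a1))).1 = _
      rw [fold_succ n]
      rfl
  have hConsB : Game.ConsE σN ρB := by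
    intro n
    refine ⟨?_, Subsingleton.elim _ _, Subsingleton.elim _ _⟩
    show σN.f1 _ _ _ = σN.f1 (Game.hist ρB n) (ρB n).st (ρB n).a1
    exact (congrArg (fun l => σN.f1 l (ρB n).st (ρB n).a1) (hhist n)).symm
  have hwpB := hσN ρB hStB hConsB
  have hlegB : ∀ n, Game.RoundLegal ((boxNPA M B).letterGame) ρB n := by
    intro n
    induction n using Nat.strong_induction_on with
    | _ n ih =>
    refine ⟨Set.mem_univ _, ?_, Set.mem_univ _, Set.mem_univ _, Set.mem_univ _, Set.mem_univ _⟩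
    exact hwpB.1 n (fun k hk => ih k hk) (Set.mem_univ _)
  have hsrc : ∀ n, ((ρB n).e1).1 = (ρB n).st := fun n => (hlegB n).2.1.1
  have hlab : ∀ n, ((ρB n).e1).2.val.1 = (ρ n).a1 := fun n => (hlegB n).2.1.2
  have he1 : ∀ n, (ρ n).e1 = ((ρB n).e1).2.val.2 ((ρ n).st) := by
    intro n
    have h1 := (hCons n).1
    rw [h1]
    show ((σN.f1 (bhFold M B σN ((Game.hist ρ n).map (fun r => r.a1))).2
      (bhFold M B σN ((Game.hist ρ n).map (fun r => r.a1))).1 ((ρ n).a1)).2.val.2 ((ρ n).st)) = _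
    rw [Game.hist, List.map_map]
    rfl
  have hst2 : ∀ n, (ρ (n+1)).st = (ρ n).a2 := fun n => hSt.2 n
  refine ⟨?_, ?_, ?_, ?_⟩
  · intro n _ _
    show (ρ n).e1 ∈ PosBool.eveRes (M.delta (ρ n).st (ρ n).a1)
    rw [he1 n]
    have hbox := ((ρB n).e1).2.property ((ρ n).st)
    rwa [hlab n] at hbox
  · intro n _ _ _ _
    exact Set.mem_univ _
  · intro n _ _ _ _ _ _
    exact Set.mem_univ _
  · intro hlegAll
    rcases hwpB.2.2.2 hlegB with hnotin | hpar
    · -- the word is not in the language of `A^□`, hence not in `L(M)`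
      left
      intro hwL
      apply hnotin
      have he : (fun n => (ρB n).a1) = (fun n => (ρ n).a1) := rfl
      rw [he]
      exact lang_subset_boxNPA M p hp B hB _ hwL
    · -- Eve's run of `A^□` is accepting: the box word is universally accepting
      right
      have hrun : ∀ n, B.run (fun k => ((ρB k).e1).2) n = (ρB n).st := by
        intro n
        induction n with
        | zero => rfl
        | succ k ihr =>
          show B.step (B.run (fun k => ((ρB k).e1).2) k) ((ρB k).e1).2 = _
          rw [ihr]
          have h2 : (ρB (k+1)).st = (boxNPA M B).dst (ρB k).e1 := by
            show (bhFold M B σN ((List.range (k+1)).map (fun i => (ρ i).a1))).1 = _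
            rw [fold_succ k]
          rw [h2, ← hsrc k]
          rfl
      have huL : (fun k => ((ρB k).e1).2) ∈ B.Lang := by
        show ParityAccept _
        have hfe : (fun n => B.prio (B.run (fun k => ((ρB k).e1).2) n) ((fun k => ((ρB k).e1).2) n))
            = (fun n => (boxNPA M B).prio (ρB n).e1) := by
          funext n
          show B.prio (B.run (fun k => ((ρB k).e1).2) n) ((ρB n).e1).2 = B.prio ((ρB n).e1).1 ((ρB n).e1).2
          rw [hrun n, hsrc n]
        rw [hfe]
        exact hpar
      rw [hB] at huL
      have hacc := huL (fun n => (ρ n).st) hSt.1 ?_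
      · have hfe2 : (fun n => ((ρ n).st, (((ρB n).e1).2.val.1), (ρ (n+1)).st))
            = (fun n => ((ρ n).st, (ρ n).a1, (ρ n).a2)) := by
          funext n
          rw [hlab n, hst2 n]
        rw [← hfe2]
        exact hacc
      · intro n
        have ha2 := (hlegAll n).2.2.1
        show (ρ (n+1)).st ∈ ((ρB n).e1).2.val.2 ((ρ n).st)
        rw [hst2 n, ← he1 n]
        exact ha2
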